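/- The extended 𝔟𝔪𝔰₄ bracket is a Lie bracket: on the complex vector space of quadruples (Y,Ȳ,T,ω) with Y ∈ W, Ȳ ∈ W̄, T,ω ∈ R, the bracket [(Y₁,Ȳ₁,T₁,ω₁),(Y₂,Ȳ₂,T₂,ω₂)] = (Ŷ,Ŷ̄,T̂,0) is bilinear, alternating, and satisfies the Jacobi identity, so it defines a complex Lie algebra. -/

import Mathlib

/-!
The extended `𝔟𝔪𝔰₄` bracket is a Lie bracket.

We work over `ℂ`.  The ring `R = ℂ[ζ,ζ⁻¹,ζ̄,ζ̄⁻¹]` of Laurent polynomials in two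
variables is modelled as the monoid algebra `LR := AddMonoidAlgebra ℂ (ℤ × ℤ)`,
the basis monomial `single (m, n) 1` representing `ζ^m ζ̄^n`, with the formal
partial derivatives `∂ = ∂_ζ` and `∂̄ = ∂_ζ̄`.  The rings `W = ℂ[ζ,ζ⁻¹]` and
`W̄ = ℂ[ζ̄,ζ̄⁻¹]` are modelled as copies of `AddMonoidAlgebra ℂ ℤ`, included
into `LR` via `ζ^m ↦ single (m,0)` resp. `ζ̄^n ↦ single (0,n)`, each carrying
its own formal derivative (`∂` on `W`, `∂̄` on `W̄`).
-/

/-- `R = ℂ[ζ,ζ⁻¹,ζ̄,ζ̄⁻¹]`. -/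
abbrev LR : Type := AddMonoidAlgebra ℂ (ℤ × ℤ)

/-- A copy of the Laurent polynomial ring `ℂ[ζ,ζ⁻¹]` (resp. `ℂ[ζ̄,ζ̄⁻¹]`) in one variable. -/
abbrev W : Type := AddMonoidAlgebra ℂ ℤ

/-- The formal derivative `∂ = ∂_ζ` on `R`. -/
noncomputable def pd : LR →ₗ[ℂ] LR :=
  (AddMonoidAlgebra.coeffLinearEquiv ℂ).symm.toLinearMap ∘ₗ
    (Finsupp.lsum ℂ fun mn : ℤ × ℤ => (mn.1 : ℂ) • Finsupp.lsingle (mn.1 - 1, mn.2) :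
      (ℤ × ℤ →₀ ℂ) →ₗ[ℂ] (ℤ × ℤ →₀ ℂ)) ∘ₗ (AddMonoidAlgebra.coeffLinearEquiv ℂ).toLinearMap

/-- The formal derivative `∂̄ = ∂_ζ̄` on `R`. -/
noncomputable def pdBar : LR →ₗ[ℂ] LR :=
  (AddMonoidAlgebra.coeffLinearEquiv ℂ).symm.toLinearMap ∘ₗ
    (Finsupp.lsum ℂ fun mn : ℤ × ℤ => (mn.2 : ℂ) • Finsupp.lsingle (mn.1, mn.2 - 1) :
      (ℤ × ℤ →₀ ℂ) →ₗ[ℂ] (ℤ × ℤ →₀ ℂ)) ∘ₗ (AddMonoidAlgebra.coeffLinearEquiv ℂ).toLinearMap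

/-- The formal derivative on the one-variable Laurent polynomial ring `W` (this is `∂`
on `W = ℂ[ζ,ζ⁻¹]` and `∂̄` on `W̄ = ℂ[ζ̄,ζ̄⁻¹]`). -/
noncomputable def wd : W →ₗ[ℂ] W :=
  (AddMonoidAlgebra.coeffLinearEquiv ℂ).symm.toLinearMap ∘ₗ
    (Finsupp.lsum ℂ fun m : ℤ => (m : ℂ) • Finsupp.lsingle (m - 1) :
      (ℤ →₀ ℂ) →ₗ[ℂ] (ℤ →₀ ℂ)) ∘ₗ (AddMonoidAlgebra.coeffLinearEquiv ℂ).toLinearMap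

/-- The inclusion `W = ℂ[ζ,ζ⁻¹] ↪ R`, `ζ^m ↦ ζ^m`. -/
noncomputable def incW : W →ₗ[ℂ] LR :=
  (AddMonoidAlgebra.coeffLinearEquiv ℂ).symm.toLinearMap ∘ₗ
    (Finsupp.lsum ℂ fun m : ℤ => Finsupp.lsingle (m, 0) :
      (ℤ →₀ ℂ) →ₗ[ℂ] (ℤ × ℤ →₀ ℂ)) ∘ₗ (AddMonoidAlgebra.coeffLinearEquiv ℂ).toLinearMap

/-- The inclusion `W̄ = ℂ[ζ̄,ζ̄⁻¹] ↪ R`, `ζ̄^n ↦ ζ̄^n`. -/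
noncomputable def incWbar : W →ₗ[ℂ] LR :=
  (AddMonoidAlgebra.coeffLinearEquiv ℂ).symm.toLinearMap ∘ₗ
    (Finsupp.lsum ℂ fun n : ℤ => Finsupp.lsingle (0, n) :
      (ℤ →₀ ℂ) →ₗ[ℂ] (ℤ × ℤ →₀ ℂ)) ∘ₗ (AddMonoidAlgebra.coeffLinearEquiv ℂ).toLinearMap

/-- The complex vector space of quadruples `(Y, Ȳ, T, ω)` with `Y ∈ W`, `Ȳ ∈ W̄`,
`T, ω ∈ R`. -/
abbrev ExtBms4 : Type := W × W × LR × LR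

/-- `ψ = ∂Y + ∂̄Ȳ ∈ R` associated to a quadruple. -/
noncomputable def psi (x : ExtBms4) : LR := incW (wd x.1) + incWbar (wd x.2.1)

/-- The extended `𝔟𝔪𝔰₄` bracket:
`[(Y₁,Ȳ₁,T₁,ω₁),(Y₂,Ȳ₂,T₂,ω₂)] = (Ŷ, Ŷ̄, T̂, 0)` with
`Ŷ = Y₁∂Y₂ − Y₂∂Y₁`, `Ŷ̄ = Ȳ₁∂̄Ȳ₂ − Ȳ₂∂̄Ȳ₁`,
`T̂ = Y₁∂T₂ + Ȳ₁∂̄T₂ − Y₂∂T₁ − Ȳ₂∂̄T₁ + ½(T₁ψ₂ − T₂ψ₁)` and `ω̂ = 0`. -/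
noncomputable def extBracket (x y : ExtBms4) : ExtBms4 :=
  ( x.1 * wd y.1 - y.1 * wd x.1,
    x.2.1 * wd y.2.1 - y.2.1 * wd x.2.1,
    incW x.1 * pd y.2.2.1 + incWbar x.2.1 * pdBar y.2.2.1
      - incW y.1 * pd x.2.2.1 - incWbar y.2.1 * pdBar x.2.2.1
      + (1 / 2 : ℂ) • (x.2.2.1 * psi y - y.2.2.1 * psi x),
    0 )

lemma wd_single (m : ℤ) (c : ℂ) :
    wd (AddMonoidAlgebra.single m c) = (m : ℂ) • AddMonoidAlgebra.single (m-1) c := by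
  simp only [wd, LinearMap.comp_apply, LinearEquiv.coe_coe, AddMonoidAlgebra.coeffLinearEquiv_apply,
    AddMonoidAlgebra.coeff_single, Finsupp.lsum_single, LinearMap.smul_apply, Finsupp.lsingle_apply,
    AddMonoidAlgebra.coeffLinearEquiv_symm_apply, AddMonoidAlgebra.ofCoeff_smul,
    AddMonoidAlgebra.ofCoeff_single]

lemma pd_single (m n : ℤ) (c : ℂ) :
    pd (AddMonoidAlgebra.single (m, n) c) = (m : ℂ) • AddMonoidAlgebra.single (m-1, n) c := by
  simp only [pd, LinearMap.comp_apply, LinearEquiv.coe_coe, AddMonoidAlgebra.coeffLinearEquiv_apply,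
    AddMonoidAlgebra.coeff_single, Finsupp.lsum_single, LinearMap.smul_apply, Finsupp.lsingle_apply,
    AddMonoidAlgebra.coeffLinearEquiv_symm_apply, AddMonoidAlgebra.ofCoeff_smul,
    AddMonoidAlgebra.ofCoeff_single]

lemma pdBar_single (m n : ℤ) (c : ℂ) :
    pdBar (AddMonoidAlgebra.single (m, n) c) = (n : ℂ) • AddMonoidAlgebra.single (m, n-1) c := by
  simp only [pdBar, LinearMap.comp_apply, LinearEquiv.coe_coe, AddMonoidAlgebra.coeffLinearEquiv_apply,
    AddMonoidAlgebra.coeff_single, Finsupp.lsum_single, LinearMap.smul_apply, Finsupp.lsingle_apply,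
    AddMonoidAlgebra.coeffLinearEquiv_symm_apply, AddMonoidAlgebra.ofCoeff_smul,
    AddMonoidAlgebra.ofCoeff_single]

lemma incW_single (m : ℤ) (c : ℂ) :
    incW (AddMonoidAlgebra.single m c) = AddMonoidAlgebra.single ((m, 0) : ℤ × ℤ) c := by
  simp only [incW, LinearMap.comp_apply, LinearEquiv.coe_coe, AddMonoidAlgebra.coeffLinearEquiv_apply,
    AddMonoidAlgebra.coeff_single, Finsupp.lsum_single, LinearMap.smul_apply, Finsupp.lsingle_apply,
    AddMonoidAlgebra.coeffLinearEquiv_symm_apply, AddMonoidAlgebra.ofCoeff_smul,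
    AddMonoidAlgebra.ofCoeff_single]

lemma incWbar_single (n : ℤ) (c : ℂ) :
    incWbar (AddMonoidAlgebra.single n c) = AddMonoidAlgebra.single ((0, n) : ℤ × ℤ) c := by
  simp only [incWbar, LinearMap.comp_apply, LinearEquiv.coe_coe, AddMonoidAlgebra.coeffLinearEquiv_apply,
    AddMonoidAlgebra.coeff_single, Finsupp.lsum_single, LinearMap.smul_apply, Finsupp.lsingle_apply,
    AddMonoidAlgebra.coeffLinearEquiv_symm_apply, AddMonoidAlgebra.ofCoeff_smul,
    AddMonoidAlgebra.ofCoeff_single]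

lemma wd_mul (a b : W) : wd (a * b) = wd a * b + a * wd b := by
  induction a using AddMonoidAlgebra.induction_linear with
  | zero => simp
  | add f g hf hg => simp only [add_mul, map_add, hf, hg]; ring
  | single m c =>
    induction b using AddMonoidAlgebra.induction_linear with
    | zero => simp
    | add f g hf hg => simp only [mul_add, map_add, hf, hg]; ring
    | single n d =>
      simp only [AddMonoidAlgebra.single_mul_single, wd_single, Algebra.smul_mul_assoc,
        Algebra.mul_smul_comm, AddMonoidAlgebra.single_mul_single]
      rw [show m - 1 + n = m + n - 1 by ring, show m + (n-1) = m + n - 1 by ring, ← add_smul]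
      push_cast; ring_nf

lemma pd_mul (a b : LR) : pd (a * b) = pd a * b + a * pd b := by
  induction a using AddMonoidAlgebra.induction_linear with
  | zero => simp
  | add f g hf hg => simp only [add_mul, map_add, hf, hg]; ring
  | single p c =>
    induction b using AddMonoidAlgebra.induction_linear with
    | zero => simp
    | add f g hf hg => simp only [mul_add, map_add, hf, hg]; ring
    | single q d =>
      obtain ⟨m, n⟩ := p; obtain ⟨m', n'⟩ := q
      simp only [AddMonoidAlgebra.single_mul_single, Prod.mk_add_mk, pd_single,
        Algebra.smul_mul_assoc, Algebra.mul_smul_comm]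
      rw [show m - 1 + m' = m + m' - 1 by ring, show m + (m'-1) = m + m' - 1 by ring, ← add_smul]
      push_cast; ring_nf

lemma pdBar_mul (a b : LR) : pdBar (a * b) = pdBar a * b + a * pdBar b := by
  induction a using AddMonoidAlgebra.induction_linear with
  | zero => simp
  | add f g hf hg => simp only [add_mul, map_add, hf, hg]; ring
  | single p c =>
    induction b using AddMonoidAlgebra.induction_linear with
    | zero => simp
    | add f g hf hg => simp only [mul_add, map_add, hf, hg]; ring
    | single q d =>
      obtain ⟨m, n⟩ := p; obtain ⟨m', n'⟩ := q
      simp only [AddMonoidAlgebra.single_mul_single, Prod.mk_add_mk, pdBar_single,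
        Algebra.smul_mul_assoc, Algebra.mul_smul_comm]
      rw [show n - 1 + n' = n + n' - 1 by ring, show n + (n'-1) = n + n' - 1 by ring, ← add_smul]
      push_cast; ring_nf

lemma incW_mul (a b : W) : incW (a * b) = incW a * incW b := by
  induction a using AddMonoidAlgebra.induction_linear with
  | zero => simp
  | add f g hf hg => simp only [add_mul, map_add, hf, hg]
  | single m c =>
    induction b using AddMonoidAlgebra.induction_linear with
    | zero => simp
    | add f g hf hg => simp only [mul_add, map_add, hf, hg]
    | single n d =>
      simp only [AddMonoidAlgebra.single_mul_single, incW_single, Prod.mk_add_mk, add_zero]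

lemma incWbar_mul (a b : W) : incWbar (a * b) = incWbar a * incWbar b := by
  induction a using AddMonoidAlgebra.induction_linear with
  | zero => simp
  | add f g hf hg => simp only [add_mul, map_add, hf, hg]
  | single m c =>
    induction b using AddMonoidAlgebra.induction_linear with
    | zero => simp
    | add f g hf hg => simp only [mul_add, map_add, hf, hg]
    | single n d =>
      simp only [AddMonoidAlgebra.single_mul_single, incWbar_single, Prod.mk_add_mk, add_zero]

lemma pd_incW (a : W) : pd (incW a) = incW (wd a) := by
  induction a using AddMonoidAlgebra.induction_linear with
  | zero => simp
  | add f g hf hg => simp only [map_add, hf, hg]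
  | single m c => simp only [incW_single, pd_single, wd_single, map_smul]

lemma pdBar_incW (a : W) : pdBar (incW a) = 0 := by
  induction a using AddMonoidAlgebra.induction_linear with
  | zero => simp
  | add f g hf hg => simp only [map_add, hf, hg, add_zero]
  | single m c => rw [incW_single, pdBar_single]; norm_num

lemma pd_incWbar (a : W) : pd (incWbar a) = 0 := by
  induction a using AddMonoidAlgebra.induction_linear with
  | zero => simp
  | add f g hf hg => simp only [map_add, hf, hg, add_zero]
  | single m c => rw [incWbar_single, pd_single]; norm_num

lemma pdBar_incWbar (a : W) : pdBar (incWbar a) = incWbar (wd a) := by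
  induction a using AddMonoidAlgebra.induction_linear with
  | zero => simp
  | add f g hf hg => simp only [map_add, hf, hg]
  | single m c => simp only [incWbar_single, pdBar_single, wd_single, map_smul]

lemma pdBar_pd (a : LR) : pdBar (pd a) = pd (pdBar a) := by
  induction a using AddMonoidAlgebra.induction_linear with
  | zero => simp
  | add f g hf hg => simp only [map_add, hf, hg]
  | single p c =>
    obtain ⟨m, n⟩ := p
    simp only [pd_single, pdBar_single, map_smul]
    rw [smul_comm]

/-- The extended `𝔟𝔪𝔰₄` bracket is bilinear, alternating and satisfies
the Jacobi identity on the space of quadruples `(Y,Ȳ,T,ω)`, hence defines a complex Lie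
algebra structure on it. -/
theorem extBracket_is_lie_bracket :
    (∀ (a : ℂ) (x x' y : ExtBms4),
        extBracket (a • x + x') y = a • extBracket x y + extBracket x' y) ∧
    (∀ (a : ℂ) (x y y' : ExtBms4),
        extBracket x (a • y + y') = a • extBracket x y + extBracket x y') ∧
    (∀ x : ExtBms4, extBracket x x = 0) ∧
    (∀ x y z : ExtBms4,
        extBracket x (extBracket y z) + extBracket y (extBracket z x)
          + extBracket z (extBracket x y) = 0) := by
  refine ⟨?_, ?_, ?_, ?_⟩
  · intro a x x' y
    refine Prod.ext ?_ (Prod.ext ?_ (Prod.ext ?_ ?_)) <;>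
      simp only [extBracket, psi, Prod.fst_add, Prod.snd_add, Prod.smul_fst, Prod.smul_snd,
        Prod.fst_zero, Prod.snd_zero, map_add, map_smul, smul_add, smul_sub, add_mul,
        mul_add, smul_zero, add_zero] <;>
      (try simp only [Algebra.smul_def]) <;> ring
  · intro a x y y'
    refine Prod.ext ?_ (Prod.ext ?_ (Prod.ext ?_ ?_)) <;>
      simp only [extBracket, psi, Prod.fst_add, Prod.snd_add, Prod.smul_fst, Prod.smul_snd,
        Prod.fst_zero, Prod.snd_zero, map_add, map_smul, smul_add, smul_sub, add_mul,
        mul_add, smul_zero, add_zero] <;>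
      (try simp only [Algebra.smul_def]) <;> ring
  · intro x
    refine Prod.ext ?_ (Prod.ext ?_ (Prod.ext ?_ ?_)) <;>
      simp only [extBracket, psi, Prod.fst_zero, Prod.snd_zero] <;>
      (try simp only [Algebra.smul_def]) <;> ring
  · intro x y z
    refine Prod.ext ?_ (Prod.ext ?_ (Prod.ext ?_ ?_)) <;>
      simp only [extBracket, psi, Prod.fst_add, Prod.snd_add, Prod.fst_zero, Prod.snd_zero,
        map_add, map_sub, map_smul,
        wd_mul, pd_mul, pdBar_mul, incW_mul, incWbar_mul, pd_incW, pdBar_incW, pd_incWbar,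
        pdBar_incWbar, pdBar_pd, mul_zero, zero_mul, add_zero, zero_add, smul_zero,
        smul_add, smul_sub] <;>
      (try simp only [Algebra.smul_def]) <;> ring
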